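/- (GYP theorem consequence for Tsallis relative entropy) Let P and R be probability measures with P ≪ R and q > 1. Then the Tsallis relative entropy I_q(P‖R) = (∫_X (dP/dR)^q dR − 1)/(q−1) equals the supremum over all finite measurable partitions {E_k}_{k=1}^m of X of (Σ_k P(E_k)^q / R(E_k)^(q-1) − 1)/(q−1). -/

import Mathlib

open MeasureTheory ENNReal Filter

/-- A finite measurable partition of `X`. -/
structure FinPartition (X : Type*) [MeasurableSpace X] where
  m : ℕ
  E : Fin m → Set X
  meas : ∀ k, MeasurableSet (E k)
  disj : Pairwise (Function.onFun Disjoint E)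
  cover : ⋃ k, E k = Set.univ

instance FinPartition.instNonempty {X : Type*} [MeasurableSpace X] :
    Nonempty (FinPartition X) :=
  ⟨⟨1, fun _ => Set.univ, fun _ => MeasurableSet.univ,
    Subsingleton.pairwise, Set.iUnion_const Set.univ⟩⟩

lemma per_set_upper {X : Type*} [MeasurableSpace X] (P R : Measure X)
    [IsProbabilityMeasure P] [IsProbabilityMeasure R] (h : P ≪ R) (q : ℝ) (hq : 1 < q)
    (E : Set X) :
    P E ^ q / R E ^ (q - 1) ≤ lintegral (R.restrict E) (fun x => P.rnDeriv R x ^ q) := by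
  have hq0 : (0:ℝ) < q := lt_trans one_pos hq
  by_cases hRE : R E = 0
  · have hPE : P E = 0 := h hRE
    simp [hPE, ENNReal.zero_rpow_of_pos hq0]
  · have hREtop : R E ≠ ⊤ := (measure_lt_top R E).ne
    have hb0 : R E ^ (q - 1) ≠ 0 := by
      simp [ENNReal.rpow_eq_zero_iff, hRE, hREtop]
    have hbt : R E ^ (q - 1) ≠ ⊤ := by
      simp [ENNReal.rpow_eq_top_iff, hRE, hREtop]
    have hconj : q.HolderConjugate (q/(q-1)) := Real.HolderConjugate.conjExponent hq
    have hf : AEMeasurable (P.rnDeriv R) (R.restrict E) :=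
      (Measure.measurable_rnDeriv P R).aemeasurable
    have hH := ENNReal.lintegral_mul_le_Lp_mul_Lq (R.restrict E) hconj hf
      (aemeasurable_const (b := (1:ℝ≥0∞)))
    simp only [Pi.mul_apply, one_mul, mul_one, ENNReal.one_rpow, lintegral_const,
      Measure.restrict_apply, MeasurableSet.univ, Set.univ_inter] at hH
    set A := lintegral (R.restrict E) (fun x => P.rnDeriv R x ^ q) with hA
    have hPEeq : P E = lintegral (R.restrict E) (fun x => P.rnDeriv R x) :=
      (Measure.setLIntegral_rnDeriv h E).symm
    have h1q' : 1 / (q / (q - 1)) = (q - 1) / q := by field_simp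
    rw [← hPEeq, h1q'] at hH
    have hpow : P E ^ q ≤ A * R E ^ (q - 1) := by
      calc P E ^ q ≤ (A ^ (1/q) * R E ^ ((q-1)/q)) ^ q :=
            ENNReal.rpow_le_rpow hH (le_of_lt hq0)
        _ = (A ^ (1/q)) ^ q * (R E ^ ((q-1)/q)) ^ q :=
            ENNReal.mul_rpow_of_nonneg _ _ (le_of_lt hq0)
        _ = A * R E ^ (q - 1) := by
            rw [← ENNReal.rpow_mul, ← ENNReal.rpow_mul,
              one_div_mul_cancel (ne_of_gt hq0), div_mul_cancel₀ _ (ne_of_gt hq0),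
              ENNReal.rpow_one]
    rw [ENNReal.div_le_iff_le_mul (Or.inl hb0) (Or.inl hbt)]
    exact hpow

lemma partition_sum_le {X : Type*} [MeasurableSpace X] (P R : Measure X)
    [IsProbabilityMeasure P] [IsProbabilityMeasure R] (h : P ≪ R) (q : ℝ) (hq : 1 < q)
    (π : FinPartition X) :
    ∑ k, P (π.E k) ^ q / R (π.E k) ^ (q - 1) ≤ lintegral R (fun x => P.rnDeriv R x ^ q) := by
  have hsum : ∑ k, lintegral (R.restrict (π.E k)) (fun x => P.rnDeriv R x ^ q)
      = lintegral R (fun x => P.rnDeriv R x ^ q) := by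
    rw [← tsum_fintype (L := SummationFilter.unconditional _), ← lintegral_iUnion π.meas π.disj, π.cover, Measure.restrict_univ]
  calc ∑ k, P (π.E k) ^ q / R (π.E k) ^ (q - 1)
      ≤ ∑ k, lintegral (R.restrict (π.E k)) (fun x => P.rnDeriv R x ^ q) :=
        Finset.sum_le_sum fun k _ => per_set_upper P R h q hq (π.E k)
    _ = _ := hsum

lemma simple_le_iSup {X : Type*} [MeasurableSpace X] (P R : Measure X)
    [IsProbabilityMeasure P] [IsProbabilityMeasure R] (h : P ≪ R) (q : ℝ) (hq : 1 < q)
    (s : SimpleFunc X ℝ≥0∞) (hs : ∀ x, s x ≤ P.rnDeriv R x ^ q) :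
    s.lintegral R ≤ ⨆ π : FinPartition X, ∑ k, P (π.E k) ^ q / R (π.E k) ^ (q - 1) := by
  have hq0 : (0:ℝ) < q := lt_trans one_pos hq
  set e : {x // x ∈ s.range} ≃ Fin s.range.card := s.range.equivFin with he
  set π : FinPartition X :=
    { m := s.range.card
      E := fun k => s ⁻¹' {(e.symm k : ℝ≥0∞)}
      meas := fun k => s.measurableSet_fiber _
      disj := by
        intro k l hkl
        have hne : ((e.symm k : ℝ≥0∞)) ≠ (e.symm l : ℝ≥0∞) := by
          intro hcontr
          exact hkl (e.symm.injective.eq_iff.mp (Subtype.ext hcontr) ▸ rfl)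
        rw [Function.onFun]
        apply Set.disjoint_left.mpr
        intro x hx hx'
        exact hne ((Set.mem_preimage.mp hx).symm.trans (Set.mem_preimage.mp hx'))
      cover := by
        apply Set.eq_univ_iff_forall.mpr
        intro x
        refine Set.mem_iUnion.mpr ⟨e ⟨s x, s.mem_range_self x⟩, ?_⟩
        simp } with hπ
  refine le_trans ?_ (le_iSup _ π)
  -- lintegral of s equals sum over partition of value * measure
  have hval : ∀ k : Fin s.range.card,
      (e.symm k : ℝ≥0∞) * R (π.E k) ≤ P (π.E k) ^ q / R (π.E k) ^ (q - 1) := by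
    intro k
    set c : ℝ≥0∞ := (e.symm k : ℝ≥0∞)
    set E : Set X := π.E k
    by_cases hRE : R E = 0
    · simp [hRE]
    · have hREtop : R E ≠ ⊤ := (measure_lt_top R E).ne
      have hEm : MeasurableSet E := π.meas k
      -- f ≥ c^(1/q) on E
      have hfE : ∀ x ∈ E, c ^ (1/q) ≤ P.rnDeriv R x := by
        intro x hx
        have hcx : c ≤ P.rnDeriv R x ^ q := by
          have : s x = c := hx
          rw [← this]; exact hs x
        calc c ^ (1/q) ≤ (P.rnDeriv R x ^ q) ^ (1/q) :=
              ENNReal.rpow_le_rpow hcx (by positivity)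
          _ = P.rnDeriv R x := by
              rw [← ENNReal.rpow_mul, mul_one_div_cancel (ne_of_gt hq0), ENNReal.rpow_one]
      have hPE : c ^ (1/q) * R E ≤ P E := by
        have : lintegral (R.restrict E) (fun x => c ^ (1/q)) ≤ lintegral (R.restrict E) (fun x => P.rnDeriv R x) :=
          setLIntegral_mono (Measure.measurable_rnDeriv P R) hfE
        rwa [setLIntegral_const, Measure.setLIntegral_rnDeriv h E] at this
      have hpow : c * R E ^ q ≤ P E ^ q := by
        calc c * R E ^ q = (c ^ (1/q) * R E) ^ q := by
              rw [ENNReal.mul_rpow_of_nonneg _ _ (le_of_lt hq0), ← ENNReal.rpow_mul,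
                one_div_mul_cancel (ne_of_gt hq0), ENNReal.rpow_one]
          _ ≤ P E ^ q := ENNReal.rpow_le_rpow hPE (le_of_lt hq0)
      calc c * R E = c * (R E ^ q / R E ^ (q-1)) := by
            rw [← ENNReal.rpow_sub _ _ hRE hREtop]
            norm_num
        _ = c * R E ^ q / R E ^ (q-1) := by rw [mul_div_assoc]
        _ ≤ P E ^ q / R E ^ (q-1) := ENNReal.div_le_div_right hpow _
  -- s.lintegral R = ∑ k, val k * R (E k)
  have hlin : s.lintegral R = ∑ k, (e.symm k : ℝ≥0∞) * R (π.E k) := by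
    rw [SimpleFunc.lintegral]
    rw [← Finset.sum_coe_sort s.range (fun c => c * R (s ⁻¹' {c}))]
    exact (Equiv.sum_comp e.symm (fun j : {x // x ∈ s.range} =>
      (j : ℝ≥0∞) * R (s ⁻¹' {(j : ℝ≥0∞)}))).symm
  rw [hlin]
  exact Finset.sum_le_sum fun k _ => hval k

lemma EReal.neg_one_ne_bot : (-1 : EReal) ≠ ⊥ := by
  rw [show (-1 : EReal) = ((-1 : ℝ) : EReal) by norm_num]
  exact EReal.coe_ne_bot _
lemma EReal.neg_one_ne_top : (-1 : EReal) ≠ ⊤ := by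
  rw [show (-1 : EReal) = ((-1 : ℝ) : EReal) by norm_num]
  exact EReal.coe_ne_top _

lemma continuous_g (c : ℝ) (hc : 0 < c) : Continuous (fun a : ℝ≥0∞ => (c : EReal) * ((a : EReal) - 1)) := by
  have h1 : Continuous (fun a : ℝ≥0∞ => (a : EReal)) := continuous_coe_ennreal_ereal
  have h2 : Continuous (fun y : EReal => y - 1) := by
    apply continuous_iff_continuousAt.mpr
    intro y
    have hadd : ContinuousAt (fun p : EReal × EReal => p.1 + p.2) (y, -1) :=
      EReal.continuousAt_add (Or.inr EReal.neg_one_ne_bot) (Or.inr EReal.neg_one_ne_top)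
    have hc2 : ContinuousAt (fun z : EReal => (z, (-1 : EReal))) y :=
      continuousAt_id.prodMk continuousAt_const
    have h3 := ContinuousAt.comp (x := y) (f := fun z : EReal => (z, (-1 : EReal))) hadd hc2
    simpa [Function.comp_def, sub_eq_add_neg] using h3
  have h3 : Continuous (fun y : EReal => (c : EReal) * y) := by
    apply continuous_iff_continuousAt.mpr
    intro y
    have hmul : ContinuousAt (fun p : EReal × EReal => p.1 * p.2) ((c : EReal), y) :=
      EReal.continuousAt_mul (by simp [ne_of_gt hc]) (by simp [ne_of_gt hc]) (by simp) (by simp)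
    have hc2 : ContinuousAt (fun z : EReal => ((c : EReal), z)) y :=
      continuousAt_const.prodMk continuousAt_id
    have h4 := ContinuousAt.comp (x := y) (f := fun z : EReal => ((c : EReal), z)) hmul hc2
    simpa [Function.comp_def] using h4
  exact h3.comp (h2.comp h1)

lemma monotone_g (c : ℝ) (hc : 0 < c) : Monotone (fun a : ℝ≥0∞ => (c : EReal) * ((a : EReal) - 1)) := by
  intro a b hab
  apply mul_le_mul_of_nonneg_left _ (by exact_mod_cast le_of_lt hc)
  exact EReal.sub_le_sub (EReal.coe_ennreal_le_coe_ennreal_iff.mpr hab) le_rfl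


theorem gyp_tsallis {X : Type*} [MeasurableSpace X]
    (P R : Measure X) [IsProbabilityMeasure P] [IsProbabilityMeasure R]
    (h : P ≪ R) (q : ℝ) (hq : 1 < q) :
    ((1 / (q - 1) : ℝ) : EReal) *
        (((lintegral R (fun x => P.rnDeriv R x ^ q) : ℝ≥0∞) : EReal) - 1)
      = ⨆ π : FinPartition X, ((1 / (q - 1) : ℝ) : EReal) *
          (((∑ k, P (π.E k) ^ q / R (π.E k) ^ (q - 1) : ℝ≥0∞) : EReal) - 1) := by
  have hc : (0:ℝ) < 1 / (q - 1) := by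
    have hq1 : (0:ℝ) < q - 1 := by linarith
    positivity
  have hfq : Measurable fun x => P.rnDeriv R x ^ q :=
    ENNReal.continuous_rpow_const.measurable.comp (Measure.measurable_rnDeriv P R)
  have key : lintegral R (fun x => P.rnDeriv R x ^ q)
      = ⨆ π : FinPartition X, ∑ k, P (π.E k) ^ q / R (π.E k) ^ (q - 1) := by
    apply le_antisymm
    · rw [lintegral_eq_iSup_eapprox_lintegral hfq]
      apply iSup_le
      intro n
      refine simple_le_iSup P R h q hq _ (fun x => ?_)
      exact le_trans
        (le_iSup (fun n => (SimpleFunc.eapprox (fun x => P.rnDeriv R x ^ q) n) x) n)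
        (le_of_eq (SimpleFunc.iSup_eapprox_apply hfq x))
    · exact iSup_le fun π => partition_sum_le P R h q hq π
  rw [key]
  exact Monotone.map_ciSup_of_continuousAt
    ((continuous_g _ hc).continuousAt) (monotone_g _ hc)
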